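/- Let p ∈ (1,∞) and let Λ = (λ_n) be an increasing sequence of nonnegative reals that is NOT quasi-lacunary. Then the map J_Λ sending b ∈ ℓ^p(ω), ω_n = (pλ_n+1)^{-1}, to Σ_n b_n t^{λ_n} ∈ L^p([0,1]) is unbounded. Concretely: for every N ∈ ℕ there exists n_0 ∈ ℕ with p λ_{n_0+N} + 1 ≤ 2(p λ_{n_0} + 1), and then for A = {n_0, …, n_0+N−1} one has ‖Σ_{j∈A} t^{λ_j}‖_p^p ≥ N^p/(2(pλ_{n_0}+1)) while Σ_{j∈A} (pλ_j+1)^{-1} ≤ N/(pλ_{n_0}+1), so the ratio ‖J_Λ(1_A)‖_p^p / ‖1_A‖_{ℓ^p(ω)}^p ≥ N^{p-1}/2. -/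

import Mathlib

open MeasureTheory Set

theorem stmt7 (p : ℝ) (hp : 1 < p)
    (lam : ℕ → ℝ) (hmono : StrictMono lam) (hlam0 : ∀ n, 0 ≤ lam n)
    (hnql : ¬ ∃ φ : ℕ → ℕ, StrictMono φ ∧ (∃ B : ℕ, ∀ k, φ (k+1) - φ k ≤ B) ∧
        ∃ r : ℝ, 1 < r ∧ ∀ k, r * lam (φ k) ≤ lam (φ (k+1))) :
    ∀ N : ℕ, ∃ n₀ : ℕ,
      p * lam (n₀ + N) + 1 ≤ 2 * (p * lam n₀ + 1) ∧
      (N : ℝ) ^ p / (2 * (p * lam n₀ + 1))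
        ≤ ∫ t in Set.Icc (0:ℝ) 1, |∑ j ∈ Finset.range N, t ^ lam (n₀ + j)| ^ p ∧
      ∑ j ∈ Finset.range N, (p * lam (n₀ + j) + 1)⁻¹ ≤ (N : ℝ) / (p * lam n₀ + 1) ∧
      (N : ℝ) ^ (p - 1) / 2
        ≤ (∫ t in Set.Icc (0:ℝ) 1, |∑ j ∈ Finset.range N, t ^ lam (n₀ + j)| ^ p)
            / (∑ j ∈ Finset.range N, (p * lam (n₀ + j) + 1)⁻¹) := by
  have hp0 : (0:ℝ) < p := by linarith
  intro N
  rcases Nat.eq_zero_or_pos N with hN0 | hN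
  · subst hN0
    refine ⟨0, by nlinarith [hlam0 0], ?_, ?_, ?_⟩
    · simp [Real.zero_rpow (ne_of_gt hp0)]
    · simp [div_nonneg, mul_nonneg hp0.le (hlam0 0)]
    · simp [Real.zero_rpow (show p - 1 ≠ 0 by intro h; nlinarith)]
  -- main case : N ≥ 1
  have hkey : ∃ n₀ : ℕ, p * lam (n₀ + N) + 1 ≤ 2 * (p * lam n₀ + 1) := by
    by_contra hcon
    push_neg at hcon
    refine hnql ⟨fun k => k * N, ?_, ⟨N, ?_⟩, 2, one_lt_two, ?_⟩
    · intro a b h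
      exact Nat.mul_lt_mul_of_lt_of_le h le_rfl hN
    · intro k
      show (k + 1) * N - k * N ≤ N
      rw [Nat.add_mul, one_mul, Nat.add_sub_cancel_left]
    · intro k
      have h := hcon (k * N)
      have hl := hlam0 (k * N)
      simp only [Nat.add_mul, one_mul]
      nlinarith [hmono.monotone (Nat.le_add_right (k * N) N)]
  obtain ⟨n₀, h1⟩ := hkey
  set M := n₀ + N with hM
  set D₀ : ℝ := p * lam n₀ + 1 with hD₀
  have hD₀pos : 0 < D₀ := by
    have := hlam0 n₀; positivity
  have hlamM : 0 < lam M := lt_of_le_of_lt (hlam0 n₀) (hmono (by omega))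
  have hr : 0 < p * lam M := mul_pos hp0 hlamM
  have hNpos : (0:ℝ) < N := by exact_mod_cast hN
  -- continuity facts
  have hcontg : ContinuousOn (fun t : ℝ => (N:ℝ) ^ p * t ^ (p * lam M)) (Icc 0 1) := by
    exact continuousOn_const.mul (continuousOn_id.rpow_const fun x _ => Or.inr hr.le)
  have hcontf : ContinuousOn
      (fun t : ℝ => |∑ j ∈ Finset.range N, t ^ lam (n₀ + j)| ^ p) (Icc 0 1) := by
    apply ContinuousOn.rpow_const
    · apply ContinuousOn.abs
      exact continuousOn_finset_sum _ fun j _ =>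
        continuousOn_id.rpow_const fun x _ => Or.inr (hlam0 _)
    · intro x _; exact Or.inr hp0.le
  -- pointwise bound
  have hpt : ∀ t ∈ Icc (0:ℝ) 1,
      (N:ℝ) ^ p * t ^ (p * lam M) ≤ |∑ j ∈ Finset.range N, t ^ lam (n₀ + j)| ^ p := by
    rintro t ⟨ht0, ht1⟩
    have hsum0 : 0 ≤ ∑ j ∈ Finset.range N, t ^ lam (n₀ + j) :=
      Finset.sum_nonneg fun j _ => Real.rpow_nonneg ht0 _
    rw [abs_of_nonneg hsum0]
    have hterm : ∀ j ∈ Finset.range N, t ^ lam M ≤ t ^ lam (n₀ + j) := by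
      intro j hj
      rcases eq_or_lt_of_le ht0 with h0 | h0
      · rw [← h0, Real.zero_rpow (ne_of_gt hlamM)]
        exact Real.rpow_nonneg le_rfl _
      · exact Real.rpow_le_rpow_of_exponent_ge h0 ht1
          (hmono.monotone (by simp only [Finset.mem_range] at hj; omega))
    have h1' : (N:ℝ) * t ^ lam M ≤ ∑ j ∈ Finset.range N, t ^ lam (n₀ + j) := by
      calc (N:ℝ) * t ^ lam M = ∑ _j ∈ Finset.range N, t ^ lam M := by
            rw [Finset.sum_const, Finset.card_range, nsmul_eq_mul]
        _ ≤ _ := Finset.sum_le_sum hterm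
    have hkey : ((N:ℝ) * t ^ lam M) ^ p = (N:ℝ) ^ p * t ^ (p * lam M) := by
      rw [Real.mul_rpow (Nat.cast_nonneg N) (Real.rpow_nonneg ht0 _),
        ← Real.rpow_mul ht0, mul_comm (lam M) p]
    rw [← hkey]
    exact Real.rpow_le_rpow (by positivity) h1' hp0.le
  -- integral of the lower bound
  have hinteg : ∫ t in Icc (0:ℝ) 1, (N:ℝ) ^ p * t ^ (p * lam M)
      = (N:ℝ) ^ p / (p * lam M + 1) := by
    rw [MeasureTheory.integral_Icc_eq_integral_Ioc,
      ← intervalIntegral.integral_of_le (zero_le_one), intervalIntegral.integral_const_mul,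
      integral_rpow (Or.inl (by linarith))]
    rw [Real.one_rpow, Real.zero_rpow (by positivity)]
    ring
  have hintle : (N:ℝ) ^ p / (p * lam M + 1)
      ≤ ∫ t in Icc (0:ℝ) 1, |∑ j ∈ Finset.range N, t ^ lam (n₀ + j)| ^ p := by
    rw [← hinteg]
    exact setIntegral_mono_on (hcontg.integrableOn_Icc) (hcontf.integrableOn_Icc)
      measurableSet_Icc hpt
  have hpart2 : (N:ℝ) ^ p / (2 * D₀)
      ≤ ∫ t in Icc (0:ℝ) 1, |∑ j ∈ Finset.range N, t ^ lam (n₀ + j)| ^ p := by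
    refine le_trans ?_ hintle
    apply div_le_div_of_nonneg_left (by positivity) (by positivity) h1
  have hpart3 : ∑ j ∈ Finset.range N, (p * lam (n₀ + j) + 1)⁻¹ ≤ (N:ℝ) / D₀ := by
    calc ∑ j ∈ Finset.range N, (p * lam (n₀ + j) + 1)⁻¹
        ≤ ∑ _j ∈ Finset.range N, D₀⁻¹ := by
          refine Finset.sum_le_sum fun j _ => ?_
          have hle : lam n₀ ≤ lam (n₀ + j) := hmono.monotone (Nat.le_add_right _ _)
          have : D₀ ≤ p * lam (n₀ + j) + 1 := by
            simp only [hD₀]; nlinarith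
          exact inv_anti₀ hD₀pos this
      _ = (N:ℝ) / D₀ := by
          rw [Finset.sum_const, Finset.card_range, nsmul_eq_mul, div_eq_mul_inv]
  -- ratio bound
  have hSpos : 0 < ∑ j ∈ Finset.range N, (p * lam (n₀ + j) + 1)⁻¹ := by
    refine Finset.sum_pos (fun j _ => ?_) ⟨0, Finset.mem_range.mpr hN⟩
    have := hlam0 (n₀ + j); positivity
  have hpart4 : (N:ℝ) ^ (p - 1) / 2
      ≤ (∫ t in Icc (0:ℝ) 1, |∑ j ∈ Finset.range N, t ^ lam (n₀ + j)| ^ p)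
          / (∑ j ∈ Finset.range N, (p * lam (n₀ + j) + 1)⁻¹) := by
    set I := ∫ t in Icc (0:ℝ) 1, |∑ j ∈ Finset.range N, t ^ lam (n₀ + j)| ^ p with hI
    set S := ∑ j ∈ Finset.range N, (p * lam (n₀ + j) + 1)⁻¹ with hS
    have hstep1 : ((N:ℝ) ^ p / (2 * D₀)) / ((N:ℝ) / D₀) ≤ I / S := by
      calc ((N:ℝ) ^ p / (2 * D₀)) / ((N:ℝ) / D₀)
          ≤ ((N:ℝ) ^ p / (2 * D₀)) / S :=
            div_le_div_of_nonneg_left (by positivity) hSpos hpart3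
        _ ≤ I / S := div_le_div_of_nonneg_right hpart2 hSpos.le
    refine le_trans (le_of_eq ?_) hstep1
    have hNp : (N:ℝ) ^ p = (N:ℝ) ^ (p - 1) * N := by
      rw [show (N:ℝ) ^ p = (N:ℝ) ^ (p - 1 + 1) by norm_num, Real.rpow_add hNpos,
        Real.rpow_one]
    rw [hNp]
    field_simp
  exact ⟨n₀, h1, hpart2, hpart3, hpart4⟩
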